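/- Let a ≥ 0 and b > 0, and let f : [0,∞) → ℝ be continuous with |f(x)| ≤ M_f·(1+x²) for all x ≥ 0 and some constant M_f > 0. Then for every x ∈ [0,b] and every n ∈ ℕ, |K_n^a(f;x) − f(x)| ≤ 4M_f·(1+b²)·u_{n,2}^a(x) + 2·ω_{b+1}(f, √(u_{n,2}^a(x))), where ω_{b+1}(f,δ) = sup_{|t−x|≤δ, x,t∈[0,b+1]} |f(t) − f(x)| is the modulus of continuity of f on [0,b+1] and u_{n,2}^a(x) = K_n^a((t−x)²;x). -/

import Mathlib

open MeasureTheory Filter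

noncomputable section

/-- Rising factorial `(n)_i = n(n+1)⋯(n+i-1)`, with `(n)_0 = 1`. -/
def risingFac (n : ℕ) : ℕ → ℝ
  | 0 => 1
  | i + 1 => risingFac n i * ((n : ℝ) + i)

/-- `P_k(n,a) = Σ_{i=0}^{k} C(k,i) (n)_i a^(k-i)`. -/
def Pba (k n : ℕ) (a : ℝ) : ℝ :=
  ∑ i ∈ Finset.range (k + 1), (k.choose i : ℝ) * risingFac n i * a ^ (k - i)

/-- Generalized Baskakov basis function `W_{n,k}^a(x)`. -/
def Wgb (a : ℝ) (n k : ℕ) (x : ℝ) : ℝ :=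
  Real.exp (-(a * x) / (1 + x)) * (Pba k n a / (Nat.factorial k : ℝ)) * x ^ k /
    (1 + x) ^ (n + k)

/-- Generalized Baskakov–Kantorovich operator `K_n^a(f;x)`. -/
def Kgb (a : ℝ) (n : ℕ) (f : ℝ → ℝ) (x : ℝ) : ℝ :=
  ((n : ℝ) + 1) * ∑' k : ℕ,
    Wgb a n k x * ∫ t in ((k : ℝ) / ((n : ℝ) + 1))..(((k : ℝ) + 1) / ((n : ℝ) + 1)), f t


/-- Modulus of continuity of `f` on the finite interval `[0,b]`:
`ω_b(f,δ) = sup_{x,t∈[0,b], |t−x|≤δ} |f(t) − f(x)|`. -/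
def modContOn (f : ℝ → ℝ) (b δ : ℝ) : ℝ :=
  sSup {y | ∃ s t : ℝ, s ∈ Set.Icc (0 : ℝ) b ∧ t ∈ Set.Icc (0 : ℝ) b ∧ |t - s| ≤ δ ∧
    y = |f t - f s|}

lemma risingFac_nonneg (n i : ℕ) : 0 ≤ risingFac n i := by
  induction i with
  | zero => norm_num [risingFac]
  | succ i ih => simpa [risingFac] using mul_nonneg ih (by positivity)

lemma risingFac_shift (n i : ℕ) : risingFac n (i+1) = n * risingFac (n+1) i := by
  induction i with
  | zero => simp [risingFac]
  | succ i ih =>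
      have : risingFac n (i+2) = risingFac n (i+1) * ((n:ℝ) + ((i:ℕ)+1 : ℕ)) := rfl
      rw [this, ih]
      have : risingFac (n+1) (i+1) = risingFac (n+1) i * (((n:ℝ)+1) + i) := by
        simp [risingFac]
      rw [this]; push_cast; ring

lemma risingFac_div_fac_sum (n i : ℕ) :
    risingFac (n+1) i / (Nat.factorial i : ℝ) =
      ∑ j ∈ Finset.range (i+1), risingFac n j / (Nat.factorial j : ℝ) := by
  induction i with
  | zero => simp [risingFac]
  | succ i ih =>
      rw [Finset.sum_range_succ, ← ih]
      have h1 : risingFac (n+1) (i+1) = risingFac (n+1) i * ((((n:ℕ)+1 : ℕ):ℝ) + i) := rfl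
      have h2 : risingFac n (i+1) = n * risingFac (n+1) i := risingFac_shift n i
      have hf : (Nat.factorial (i+1) : ℝ) = (i+1) * Nat.factorial i := by
        push_cast [Nat.factorial_succ]; ring
      have hfi : (Nat.factorial i : ℝ) ≠ 0 := by positivity
      have hfi1 : ((i:ℝ)+1) ≠ 0 := by positivity
      rw [h1, h2, hf]
      field_simp
      push_cast; ring

lemma hasSum_cauchy {f g : ℕ → ℝ} {A B : ℝ}
    (hf : Summable fun k => ‖f k‖) (hg : Summable fun k => ‖g k‖)
    (hA : HasSum f A) (hB : HasSum g B) :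
    HasSum (fun k => ∑ i ∈ Finset.range (k+1), f i * g (k-i)) (A*B) := by
  have hs := (summable_norm_sum_mul_range_of_summable_norm hf hg).of_norm
  have := hs.hasSum
  rwa [← tsum_mul_tsum_eq_tsum_sum_range_of_summable_norm hf hg,
    hA.tsum_eq, hB.tsum_eq] at this

lemma risingFac_zero_left (i : ℕ) : risingFac 0 (i+1) = 0 := by
  induction i with
  | zero => simp [risingFac]
  | succ i ih =>
      have : risingFac 0 (i+2) = risingFac 0 (i+1) * (((0:ℕ):ℝ) + ((i:ℕ)+1:ℕ)) := rfl
      simp [this, ih]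

lemma hasSum_rising (n : ℕ) {u : ℝ} (hu0 : 0 ≤ u) (hu1 : u < 1) :
    HasSum (fun i => risingFac n i / (Nat.factorial i : ℝ) * u ^ i) (((1-u)⁻¹) ^ n) := by
  induction n with
  | zero =>
      have : (fun i => risingFac 0 i / (Nat.factorial i : ℝ) * u ^ i)
          = (fun i => if i = 0 then (1:ℝ) else 0) := by
        funext i
        cases i with
        | zero => simp [risingFac]
        | succ i => simp [risingFac_zero_left]
      rw [this]
      simpa using hasSum_ite_eq (0:ℕ) (1:ℝ)
  | succ n ih =>
      have hgeo : HasSum (fun j => u ^ j) ((1-u)⁻¹) := hasSum_geometric_of_lt_one hu0 hu1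
      have hf : Summable fun k => ‖risingFac n k / (Nat.factorial k : ℝ) * u ^ k‖ := by
        have := ih.summable
        refine this.abs.congr fun k => ?_
        rw [Real.norm_eq_abs]
      have hg : Summable fun k => ‖u ^ k‖ := by
        refine hgeo.summable.abs.congr fun k => ?_
        rw [Real.norm_eq_abs]
      have h := hasSum_cauchy hf hg ih hgeo
      have heq : (fun k => ∑ i ∈ Finset.range (k+1),
          (risingFac n i / (Nat.factorial i : ℝ) * u ^ i) * u ^ (k-i))
          = fun k => risingFac (n+1) k / (Nat.factorial k : ℝ) * u ^ k := by
        funext k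
        rw [risingFac_div_fac_sum, Finset.sum_mul]
        refine Finset.sum_congr rfl fun i hi => ?_
        have hik : i ≤ k := Nat.lt_succ_iff.mp (Finset.mem_range.mp hi)
        rw [mul_assoc, ← pow_add]
        congr 2
        omega
      rw [heq] at h
      simpa [pow_succ] using h

lemma Pba_nonneg {a : ℝ} (ha : 0 ≤ a) (k n : ℕ) : 0 ≤ Pba k n a := by
  refine Finset.sum_nonneg fun i _ => ?_
  have := risingFac_nonneg n i
  positivity

lemma hasSum_Pba (n : ℕ) {a u : ℝ} (ha : 0 ≤ a) (hu0 : 0 ≤ u) (hu1 : u < 1) :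
    HasSum (fun k => Pba k n a / (Nat.factorial k : ℝ) * u ^ k)
      (((1-u)⁻¹) ^ n * Real.exp (a*u)) := by
  have hexp : HasSum (fun j => (a*u) ^ j / (Nat.factorial j : ℝ)) (Real.exp (a*u)) := by
    rw [Real.exp_eq_exp_ℝ]
    exact NormedSpace.expSeries_div_hasSum_exp (a*u)
  have hA := hasSum_rising n hu0 hu1
  have hf : Summable fun k => ‖risingFac n k / (Nat.factorial k : ℝ) * u ^ k‖ := by
    refine hA.summable.abs.congr fun k => ?_; rw [Real.norm_eq_abs]
  have hg : Summable fun k => ‖(a*u) ^ k / (Nat.factorial k : ℝ)‖ := by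
    refine hexp.summable.abs.congr fun k => ?_; rw [Real.norm_eq_abs]
  have h := hasSum_cauchy hf hg hA hexp
  have heq : (fun k => ∑ i ∈ Finset.range (k+1),
      (risingFac n i / (Nat.factorial i : ℝ) * u ^ i) * ((a*u) ^ (k-i) / (Nat.factorial (k-i) : ℝ)))
      = fun k => Pba k n a / (Nat.factorial k : ℝ) * u ^ k := by
    funext k
    rw [Pba, Finset.sum_div, Finset.sum_mul]
    refine Finset.sum_congr rfl fun i hi => ?_
    have hik : i ≤ k := Nat.lt_succ_iff.mp (Finset.mem_range.mp hi)
    rw [Nat.cast_choose ℝ hik, mul_pow]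
    have h1 : (Nat.factorial i : ℝ) ≠ 0 := by positivity
    have h2 : (Nat.factorial (k-i) : ℝ) ≠ 0 := by positivity
    have h3 : (Nat.factorial k : ℝ) ≠ 0 := by positivity
    have hup : u ^ i * u ^ (k-i) = u ^ k := by rw [← pow_add]; congr 1; omega
    field_simp
    rw [← hup]; ring
  rw [heq] at h
  exact h

lemma Wgb_nonneg {a x : ℝ} (ha : 0 ≤ a) (hx : 0 ≤ x) (n k : ℕ) : 0 ≤ Wgb a n k x := by
  have h1 := Pba_nonneg ha k n
  have h2 : (0:ℝ) < 1 + x := by linarith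
  have h3 : (0:ℝ) < (Nat.factorial k : ℝ) := by positivity
  rw [Wgb]
  positivity

lemma hasSum_Wgb {a x : ℝ} (ha : 0 ≤ a) (hx : 0 ≤ x) (n : ℕ) :
    HasSum (fun k => Wgb a n k x) 1 := by
  have h1x : (0:ℝ) < 1 + x := by linarith
  set u : ℝ := x / (1+x) with hu
  have hu0 : 0 ≤ u := by positivity
  have hu1 : u < 1 := by rw [hu, div_lt_one h1x]; linarith
  have h1mu : 1 - u = (1+x)⁻¹ := by rw [hu]; field_simp; ring
  have h := (hasSum_Pba n ha hu0 hu1).mul_left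
    (Real.exp (-(a * x) / (1 + x)) / (1 + x) ^ n)
  have heq : (fun k => Real.exp (-(a * x) / (1 + x)) / (1 + x) ^ n *
      (Pba k n a / (Nat.factorial k : ℝ) * u ^ k)) = fun k => Wgb a n k x := by
    funext k
    rw [Wgb, hu, div_pow, pow_add]
    have h2 : ((1+x) ^ k : ℝ) ≠ 0 := by positivity
    have h3 : ((1+x) ^ n : ℝ) ≠ 0 := by positivity
    field_simp
  rw [heq] at h
  suffices hs : (1:ℝ) = Real.exp (-(a * x) / (1 + x)) / (1 + x) ^ n * ((1 - u)⁻¹ ^ n * Real.exp (a * u)) by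
    rw [hs]; exact h
  rw [h1mu, inv_inv]
  rw [show a * u = -(-(a*x)/(1+x)) by rw [hu]; field_simp]
  rw [Real.exp_neg]
  have hexp : Real.exp (-(a*x)/(1+x)) ≠ 0 := Real.exp_ne_zero _
  field_simp

lemma summable_Pba_sq (n : ℕ) {a u : ℝ} (ha : 0 ≤ a) (hu0 : 0 ≤ u) (hu1 : u < 1) :
    Summable (fun k => Pba k n a / (Nat.factorial k : ℝ) * u ^ k * (k:ℝ)^2) := by
  set v : ℝ := (1+u)/2 with hv
  have hv0 : 0 < v := by rw [hv]; linarith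
  have hv1 : v < 1 := by rw [hv]; linarith
  have huv : u < v := by rw [hv]; linarith
  have hsum := (hasSum_Pba n ha (le_of_lt hv0) hv1).summable
  have hten : Tendsto (fun k => Pba k n a / (Nat.factorial k : ℝ) * v ^ k) atTop (nhds 0) :=
    hsum.tendsto_atTop_zero
  have hev : ∀ᶠ k in atTop, Pba k n a / (Nat.factorial k : ℝ) * v ^ k ≤ 1 := by
    have := hten.eventually (eventually_le_nhds (by norm_num : (0:ℝ) < 1))
    exact this
  have hq1 : u / v < 1 := (div_lt_one hv0).mpr huv
  have hq0 : 0 ≤ u / v := by positivity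
  have hgeo : Summable (fun k : ℕ => (k:ℝ)^2 * (u/v)^k) :=
    summable_pow_mul_geometric_of_norm_lt_one 2 (by rwa [Real.norm_eq_abs, abs_of_nonneg hq0])
  refine Summable.of_norm_bounded_eventually_nat hgeo ?_
  filter_upwards [hev] with k hk
  have hP : 0 ≤ Pba k n a / (Nat.factorial k : ℝ) := by
    have := Pba_nonneg ha k n; positivity
  have hterm : 0 ≤ Pba k n a / (Nat.factorial k : ℝ) * u ^ k * (k:ℝ)^2 := by positivity
  rw [Real.norm_eq_abs, abs_of_nonneg hterm]
  have hue : u ^ k = v ^ k * (u/v) ^ k := by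
    rw [← mul_pow]; congr 1; field_simp
  rw [hue]
  calc Pba k n a / (Nat.factorial k : ℝ) * (v ^ k * (u/v) ^ k) * (k:ℝ)^2
      = (Pba k n a / (Nat.factorial k : ℝ) * v ^ k) * ((u/v) ^ k * (k:ℝ)^2) := by ring
    _ ≤ 1 * ((u/v) ^ k * (k:ℝ)^2) := by
        refine mul_le_mul_of_nonneg_right hk ?_; positivity
    _ = (k:ℝ)^2 * (u/v)^k := by ring

lemma summable_Wgb_sq {a x : ℝ} (ha : 0 ≤ a) (hx : 0 ≤ x) (n : ℕ) :
    Summable (fun k => Wgb a n k x * (k:ℝ)^2) := by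
  have h1x : (0:ℝ) < 1 + x := by linarith
  set u : ℝ := x / (1+x) with hu
  have hu0 : 0 ≤ u := by positivity
  have hu1 : u < 1 := by rw [hu, div_lt_one h1x]; linarith
  have h := (summable_Pba_sq n ha hu0 hu1).mul_left
    (Real.exp (-(a * x) / (1 + x)) / (1 + x) ^ n)
  refine h.congr fun k => ?_
  rw [Wgb, hu, div_pow, pow_add]
  have h2 : ((1+x) ^ k : ℝ) ≠ 0 := by positivity
  have h3 : ((1+x) ^ n : ℝ) ≠ 0 := by positivity
  field_simp

lemma summable_Wgb_mul_bound {a x : ℝ} (ha : 0 ≤ a) (hx : 0 ≤ x) (n : ℕ)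
    (h : ℕ → ℝ) (C : ℝ) (hh : ∀ k, |h k| ≤ C * (1 + ((k:ℝ)+1)^2)) :
    Summable (fun k => Wgb a n k x * h k) := by
  have hC : 0 ≤ C := by
    have := (abs_nonneg (h 0)).trans (hh 0)
    nlinarith
  have hs1 : Summable (fun k => Wgb a n k x) := (hasSum_Wgb ha hx n).summable
  have hs2 := summable_Wgb_sq ha hx n
  have hg : Summable (fun k => 4*C*(Wgb a n k x) + 4*C*(Wgb a n k x * (k:ℝ)^2)) :=
    ((hs1.mul_left _).add (hs2.mul_left _))
  refine Summable.of_norm_bounded hg fun k => ?_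
  have hW := Wgb_nonneg ha hx n k
  rw [Real.norm_eq_abs, abs_mul, abs_of_nonneg hW]
  calc Wgb a n k x * |h k| ≤ Wgb a n k x * (C * (1 + ((k:ℝ)+1)^2)) :=
        mul_le_mul_of_nonneg_left (hh k) hW
    _ ≤ 4*C*(Wgb a n k x) + 4*C*(Wgb a n k x * (k:ℝ)^2) := by nlinarith [mul_nonneg (mul_nonneg hC hW) (sq_nonneg ((k:ℝ)-1)), mul_nonneg (mul_nonneg hC hW) (sq_nonneg (k:ℝ)), mul_nonneg hC hW]

lemma intIk_growth (n k : ℕ) {g : ℝ → ℝ} {D : ℝ} (hD : 0 ≤ D)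
    (hg : ∀ t, 0 ≤ t → |g t| ≤ D * (1 + t^2)) :
    |∫ t in ((k:ℝ)/((n:ℝ)+1))..(((k:ℝ)+1)/((n:ℝ)+1)), g t| ≤ D * (1 + ((k:ℝ)+1)^2) := by
  have hN : (0:ℝ) < (n:ℝ)+1 := by positivity
  have hN1 : (1:ℝ) ≤ (n:ℝ)+1 := by simp
  set lo := (k:ℝ)/((n:ℝ)+1)
  set hi := ((k:ℝ)+1)/((n:ℝ)+1)
  have hlo0 : 0 ≤ lo := by positivity
  have hlohi : lo ≤ hi := by
    apply (div_le_div_iff_of_pos_right hN).mpr; linarith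
  have hhik : hi ≤ (k:ℝ)+1 := by
    rw [div_le_iff₀ hN]; nlinarith
  have hC : ∀ t ∈ Set.uIoc lo hi, ‖g t‖ ≤ D * (1 + ((k:ℝ)+1)^2) := by
    intro t htm
    rw [Set.uIoc_of_le hlohi] at htm
    have ht0 : 0 ≤ t := le_trans hlo0 (le_of_lt htm.1)
    have ht1 : t ≤ (k:ℝ)+1 := le_trans htm.2 hhik
    rw [Real.norm_eq_abs]
    refine le_trans (hg t ht0) ?_
    have h4 : t^2 ≤ ((k:ℝ)+1)^2 := by nlinarith
    nlinarith
  have := intervalIntegral.norm_integral_le_of_norm_le_const hC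
  rw [Real.norm_eq_abs] at this
  refine le_trans this ?_
  have h1 : |hi - lo| = 1/((n:ℝ)+1) := by
    rw [abs_of_nonneg (by linarith)]
    simp only [lo, hi]
    field_simp; ring
  rw [h1]
  have hc : 0 ≤ D * (1 + ((k:ℝ)+1)^2) := by positivity
  have h2 : 1/((n:ℝ)+1) ≤ 1 := by
    rw [div_le_one hN]; linarith
  nlinarith

lemma modContOn_bddAbove {f : ℝ → ℝ} {c δ : ℝ} (hc : 0 ≤ c)
    (hcont : ContinuousOn f (Set.Ici 0)) :
    BddAbove {y | ∃ s t : ℝ, s ∈ Set.Icc (0 : ℝ) c ∧ t ∈ Set.Icc (0 : ℝ) c ∧ |t - s| ≤ δ ∧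
      y = |f t - f s|} := by
  have hcomp : IsCompact (Set.Icc (0:ℝ) c) := isCompact_Icc
  have hsub : Set.Icc (0:ℝ) c ⊆ Set.Ici 0 := fun y hy => hy.1
  obtain ⟨C, hC⟩ := hcomp.exists_bound_of_continuousOn (hcont.mono hsub)
  refine ⟨2*C, fun y hy => ?_⟩
  obtain ⟨s, t, hs, ht, -, rfl⟩ := hy
  have h1 := hC s hs
  have h2 := hC t ht
  rw [Real.norm_eq_abs] at h1 h2
  calc |f t - f s| ≤ |f t| + |f s| := abs_sub _ _
    _ ≤ 2*C := by linarith

lemma modContOn_nonneg {f : ℝ → ℝ} {c δ : ℝ} (hc : 0 ≤ c) (hδ : 0 ≤ δ)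
    (hcont : ContinuousOn f (Set.Ici 0)) : 0 ≤ modContOn f c δ := by
  have h0 : |f 0 - f 0| ∈ {y | ∃ s t : ℝ, s ∈ Set.Icc (0 : ℝ) c ∧ t ∈ Set.Icc (0 : ℝ) c ∧
      |t - s| ≤ δ ∧ y = |f t - f s|} :=
    ⟨0, 0, ⟨le_refl _, hc⟩, ⟨le_refl _, hc⟩, by simpa using hδ, rfl⟩
  have := le_csSup (modContOn_bddAbove hc hcont) h0
  simpa only [modContOn, sub_self, abs_zero] using this

lemma modContOn_le {f : ℝ → ℝ} {c δ : ℝ} (hc : 0 ≤ c)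
    (hcont : ContinuousOn f (Set.Ici 0)) {s t : ℝ}
    (hs : s ∈ Set.Icc (0:ℝ) c) (ht : t ∈ Set.Icc (0:ℝ) c) (hd : |t - s| ≤ δ) :
    |f t - f s| ≤ modContOn f c δ :=
  le_csSup (modContOn_bddAbove hc hcont) ⟨s, t, hs, ht, hd, rfl⟩

lemma chain_bound {f : ℝ → ℝ} {c δ ω : ℝ} (hδ : 0 < δ) (hω : 0 ≤ ω)
    (hub : ∀ s t : ℝ, s ∈ Set.Icc (0:ℝ) c → t ∈ Set.Icc (0:ℝ) c → |t - s| ≤ δ → |f t - f s| ≤ ω)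
    {x t : ℝ} (hx : x ∈ Set.Icc (0:ℝ) c) (ht : t ∈ Set.Icc (0:ℝ) c) :
    |f t - f x| ≤ ω * (1 + (t-x)^2/δ^2) := by
  by_cases hd : |t - x| ≤ δ
  · have h1 := hub x t hx ht hd
    have h2 : 0 ≤ (t-x)^2/δ^2 := by positivity
    nlinarith
  · push_neg at hd
    set d := |t - x| with hdd
    have hd0 : 0 < d := lt_trans hδ hd
    set m : ℕ := ⌈d/δ⌉₊ with hm
    have hdδ : 1 < d/δ := (one_lt_div hδ).mpr hd
    have hmlb : d/δ ≤ (m:ℝ) := Nat.le_ceil _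
    have hm1 : 1 ≤ (m:ℝ) := le_trans (le_of_lt hdδ) hmlb
    have hm0 : (m:ℝ) ≠ 0 := by linarith
    have hmub : (m:ℝ) < d/δ + 1 := Nat.ceil_lt_add_one (by positivity)
    have hmged : d ≤ (m:ℝ)*δ := by
      rw [div_le_iff₀ hδ] at hmlb; linarith
    set p : ℕ → ℝ := fun i => x + (i:ℝ)/(m:ℝ) * (t - x) with hp
    have hp0 : p 0 = x := by simp [hp]
    have hpm : p m = t := by
      simp only [hp]; field_simp; ring
    have hmem : ∀ i, i ≤ m → p i ∈ Set.Icc (0:ℝ) c := by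
      intro i hi
      have hθ0 : 0 ≤ (i:ℝ)/(m:ℝ) := by positivity
      have hθ1 : (i:ℝ)/(m:ℝ) ≤ 1 := by
        rw [div_le_one (by linarith)]; exact_mod_cast hi
      constructor
      · simp only [hp]
        nlinarith [hx.1, ht.1, mul_nonneg hθ0 ht.1, mul_nonneg (sub_nonneg.mpr hθ1) hx.1]
      · simp only [hp]
        nlinarith [hx.2, ht.2, mul_nonneg hθ0 ht.1, mul_nonneg (sub_nonneg.mpr hθ1) hx.1,
          mul_nonneg hθ0 (sub_nonneg.mpr ht.2), mul_nonneg (sub_nonneg.mpr hθ1) (sub_nonneg.mpr hx.2)]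
    have htel : f t - f x = ∑ i ∈ Finset.range m, (f (p (i+1)) - f (p i)) := by
      rw [Finset.sum_range_sub (fun i => f (p i)) m, hp0, hpm]
    have hstep : ∀ i ∈ Finset.range m, |f (p (i+1)) - f (p i)| ≤ ω := by
      intro i hi
      have him : i < m := Finset.mem_range.mp hi
      refine hub (p i) (p (i+1)) (hmem i (le_of_lt him)) (hmem (i+1) him) ?_
      have hdiff : p (i+1) - p i = (t - x)/(m:ℝ) := by
        simp only [hp]; push_cast; field_simp; ring
      rw [hdiff, abs_div, ← hdd, abs_of_nonneg (by linarith : (0:ℝ) ≤ (m:ℝ))]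
      rw [div_le_iff₀ (by linarith : (0:ℝ) < (m:ℝ))]
      linarith
    calc |f t - f x| = |∑ i ∈ Finset.range m, (f (p (i+1)) - f (p i))| := by rw [htel]
      _ ≤ ∑ i ∈ Finset.range m, |f (p (i+1)) - f (p i)| := Finset.abs_sum_le_sum_abs _ _
      _ ≤ ∑ _i ∈ Finset.range m, ω := Finset.sum_le_sum hstep
      _ = (m:ℝ) * ω := by rw [Finset.sum_const, Finset.card_range]; ring
      _ ≤ ω * (1 + (t-x)^2/δ^2) := by
          have hsq : (t-x)^2 = d^2 := (sq_abs _).symm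
          rw [hsq]
          have h1 : d/δ ≤ (d/δ)^2 := by nlinarith
          have h2 : (d/δ)^2 = d^2/δ^2 := by rw [div_pow]
          nlinarith

lemma pointwise_bound {b Mf : ℝ} (hb : 0 < b) (hM : 0 < Mf) {f : ℝ → ℝ}
    (hcont : ContinuousOn f (Set.Ici 0))
    (hgrow : ∀ x : ℝ, 0 ≤ x → |f x| ≤ Mf * (1 + x ^ 2))
    {x : ℝ} (hx : x ∈ Set.Icc (0:ℝ) b) {δ : ℝ} (hδ : 0 < δ) {t : ℝ} (ht : 0 ≤ t) :
    |f t - f x| ≤ 4*Mf*(1+b^2)*(t-x)^2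
      + modContOn f (b+1) δ * (1 + (t-x)^2/δ^2) := by
  have hc : (0:ℝ) ≤ b + 1 := by linarith
  set ω := modContOn f (b+1) δ with hω
  have hω0 : 0 ≤ ω := modContOn_nonneg hc (le_of_lt hδ) hcont
  have hub : ∀ s t : ℝ, s ∈ Set.Icc (0:ℝ) (b+1) → t ∈ Set.Icc (0:ℝ) (b+1) → |t - s| ≤ δ →
      |f t - f s| ≤ ω := fun s t hs ht hd => modContOn_le hc hcont hs ht hd
  have hxm : x ∈ Set.Icc (0:ℝ) (b+1) := ⟨hx.1, by linarith [hx.2]⟩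
  by_cases htb : t ≤ b + 1
  · have h1 := chain_bound hδ hω0 hub hxm ⟨ht, htb⟩
    have h2 : 0 ≤ 4*Mf*(1+b^2)*(t-x)^2 := by positivity
    linarith
  · push_neg at htb
    have hs1 : 1 < t - x := by linarith [hx.2]
    have hft := hgrow t ht
    have hfx := hgrow x hx.1
    have h1 : |f t - f x| ≤ |f t| + |f x| := abs_sub _ _
    have h2 : 0 ≤ ω * (1 + (t-x)^2/δ^2) := by positivity
    have hxb := hx.2
    have hx0 := hx.1
    have hs2 : 1 ≤ (t-x)^2 := by nlinarith
    have hxs : x*(t-x) ≤ b*(t-x)^2 := by nlinarith [mul_le_mul_of_nonneg_right hxb (by linarith : (0:ℝ) ≤ t - x), mul_le_mul_of_nonneg_left hs2 (mul_nonneg (le_of_lt hb) (by linarith : (0:ℝ) ≤ t - x))]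
    have hxx : x^2 ≤ b^2*(t-x)^2 := by nlinarith [mul_le_mul hxb hxb hx0 (by linarith : (0:ℝ) ≤ b), mul_le_mul_of_nonneg_left hs2 (by positivity : (0:ℝ) ≤ b^2)]
    have P : 2 + t^2 + x^2 ≤ 4*(1+b^2)*(t-x)^2 := by nlinarith [sq_nonneg (b-1)]
    have key : Mf * (1 + t^2) + Mf * (1 + x^2) ≤ 4*Mf*(1+b^2)*(t-x)^2 := by
      nlinarith [mul_le_mul_of_nonneg_left P (le_of_lt hM)]
    linarith

def Jint (n : ℕ) (g : ℝ → ℝ) (k : ℕ) : ℝ :=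
  ∫ t in ((k : ℝ) / ((n : ℝ) + 1))..(((k : ℝ) + 1) / ((n : ℝ) + 1)), g t

lemma Kgb_eq (a : ℝ) (n : ℕ) (f : ℝ → ℝ) (x : ℝ) :
    Kgb a n f x = ((n : ℝ) + 1) * ∑' k : ℕ, Wgb a n k x * Jint n f k := rfl

lemma lo_le_hi (n k : ℕ) : (k:ℝ)/((n:ℝ)+1) ≤ ((k:ℝ)+1)/((n:ℝ)+1) := by
  have hN : (0:ℝ) < (n:ℝ)+1 := by positivity
  apply (div_le_div_iff_of_pos_right hN).mpr; linarith

lemma lo_nonneg (n k : ℕ) : 0 ≤ (k:ℝ)/((n:ℝ)+1) := by positivity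

lemma Icc_subset_Ici (n k : ℕ) :
    Set.uIcc ((k:ℝ)/((n:ℝ)+1)) (((k:ℝ)+1)/((n:ℝ)+1)) ⊆ Set.Ici 0 := by
  rw [Set.uIcc_of_le (lo_le_hi n k)]
  intro t htm
  exact le_trans (lo_nonneg n k) htm.1

lemma Jint_integrable {g : ℝ → ℝ} (hg : ContinuousOn g (Set.Ici 0)) (n k : ℕ) :
    IntervalIntegrable g volume ((k:ℝ)/((n:ℝ)+1)) (((k:ℝ)+1)/((n:ℝ)+1)) :=
  (hg.mono (Icc_subset_Ici n k)).intervalIntegrable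

lemma Jint_const (n : ℕ) (c : ℝ) (k : ℕ) :
    Jint n (fun _ => c) k = c / ((n:ℝ)+1) := by
  have hN : (0:ℝ) < (n:ℝ)+1 := by positivity
  rw [Jint, intervalIntegral.integral_const, smul_eq_mul]
  field_simp; ring

lemma Pba_zero (n : ℕ) (a : ℝ) : Pba 0 n a = 1 := by
  simp [Pba, risingFac]

lemma Wgb_zero_pos {a x : ℝ} (hx : 0 ≤ x) (n : ℕ) : 0 < Wgb a n 0 x := by
  have h1x : (0:ℝ) < 1 + x := by linarith
  rw [Wgb, Pba_zero]
  simp only [Nat.factorial_zero, Nat.cast_one, div_one, pow_zero, mul_one, Nat.add_zero]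
  positivity

lemma Jint_q_zero_pos {x : ℝ} (hx : 0 ≤ x) (n : ℕ) :
    0 < Jint n (fun t => (t - x)^2) 0 := by
  have hN : (0:ℝ) < (n:ℝ)+1 := by positivity
  set c : ℝ := ((0:ℕ):ℝ)/((n:ℝ)+1) + 1/((n:ℝ)+1) with hc
  have h0 : ((0:ℕ):ℝ)/((n:ℝ)+1) = 0 := by simp
  have hcpos : 0 < (((0:ℕ):ℝ)+1)/((n:ℝ)+1) := by positivity
  rw [Jint]
  rw [intervalIntegral.integral_comp_sub_right (fun t => t^2) x]
  rw [integral_pow]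
  set A : ℝ := (((0:ℕ):ℝ)+1)/((n:ℝ)+1) - x with hA
  clear_value A
  have hAx : 0 < A + x := by rw [hA]; simpa using hcpos
  have h00 : ((0:ℕ):ℝ)/((n:ℝ)+1) - x = -x := by simp
  rw [h00]
  have : (-x)^(2+1) = -x^3 := by ring
  rw [this]
  have hpos : 0 < A^3 + x^3 := by
    nlinarith [mul_pos hAx (mul_pos hAx hAx), mul_nonneg (le_of_lt hAx) (sq_nonneg (A - x))]
  have h23 : ((2:ℕ):ℝ) + 1 = 3 := by norm_num
  rw [h23]
  have : A ^ (2+1) = A^3 := by ring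
  rw [this]
  have hgoal : (A ^ 3 - -x ^ 3) / 3 = (A^3 + x^3)/3 := by ring
  rw [hgoal]
  linarith

/-- weighted approximation on a compact interval. -/
theorem statement3 (a b Mf : ℝ) (ha : 0 ≤ a) (hb : 0 < b) (hM : 0 < Mf) (f : ℝ → ℝ)
    (hcont : ContinuousOn f (Set.Ici 0))
    (hgrow : ∀ x : ℝ, 0 ≤ x → |f x| ≤ Mf * (1 + x ^ 2)) :
    ∀ x ∈ Set.Icc (0 : ℝ) b, ∀ n : ℕ,
      |Kgb a n f x - f x| ≤
        4 * Mf * (1 + b ^ 2) * Kgb a n (fun t => (t - x) ^ 2) x +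
          2 * modContOn f (b + 1) (Real.sqrt (Kgb a n (fun t => (t - x) ^ 2) x)) := by
  intro x hx n
  have hx0 : 0 ≤ x := hx.1
  have hxb : x ≤ b := hx.2
  have hN : (0:ℝ) < (n:ℝ) + 1 := by positivity
  have hW : HasSum (fun k => Wgb a n k x) 1 := hasSum_Wgb ha hx0 n
  have hWnn : ∀ k, 0 ≤ Wgb a n k x := fun k => Wgb_nonneg ha hx0 n k
  -- the second moment
  have hqcont : ContinuousOn (fun t : ℝ => (t - x)^2) (Set.Ici 0) :=
    ((continuous_id.sub continuous_const).pow 2).continuousOn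
  have hq_growth : ∀ t : ℝ, 0 ≤ t → |(t - x)^2| ≤ (2+2*x^2) * (1 + t^2) := by
    intro t ht
    rw [abs_of_nonneg (sq_nonneg _)]
    nlinarith [sq_nonneg (t + x), sq_nonneg t, sq_nonneg x]
  have hsum_q : Summable (fun k => Wgb a n k x * Jint n (fun t => (t - x)^2) k) :=
    summable_Wgb_mul_bound ha hx0 n _ (2+2*x^2)
      (fun k => intIk_growth n k (by positivity) hq_growth)
  have hq_nn : ∀ k, 0 ≤ Wgb a n k x * Jint n (fun t => (t - x)^2) k := by
    intro k
    refine mul_nonneg (hWnn k) ?_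
    rw [Jint]
    exact intervalIntegral.integral_nonneg (lo_le_hi n k) (fun t _ => sq_nonneg _)
  set u2 : ℝ := Kgb a n (fun t => (t - x)^2) x with hu2
  have hu2N : u2 = ((n:ℝ)+1) * ∑' k, Wgb a n k x * Jint n (fun t => (t - x)^2) k := by
    rw [hu2]; exact Kgb_eq a n _ x
  have hu2pos : 0 < u2 := by
    have h1 : Wgb a n 0 x * Jint n (fun t => (t - x)^2) 0
        ≤ ∑' k, Wgb a n k x * Jint n (fun t => (t - x)^2) k :=
      Summable.le_tsum hsum_q 0 (fun j _ => hq_nn j)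
    have h2 : 0 < Wgb a n 0 x * Jint n (fun t => (t - x)^2) 0 :=
      mul_pos (Wgb_zero_pos hx0 n) (Jint_q_zero_pos hx0 n)
    rw [hu2N]
    exact mul_pos hN (lt_of_lt_of_le h2 h1)
  set δ : ℝ := Real.sqrt u2 with hδdef
  have hδpos : 0 < δ := Real.sqrt_pos.mpr hu2pos
  have hδsq : δ^2 = u2 := Real.sq_sqrt hu2pos.le
  set ω : ℝ := modContOn f (b+1) δ with hωdef
  have hω0 : 0 ≤ ω := modContOn_nonneg (by linarith) hδpos.le hcont
  -- sums for f
  have hsum_f : Summable (fun k => Wgb a n k x * Jint n f k) :=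
    summable_Wgb_mul_bound ha hx0 n _ Mf (fun k => intIk_growth n k hM.le hgrow)
  have hconst : HasSum (fun k => Wgb a n k x * (f x / ((n:ℝ)+1))) (f x / ((n:ℝ)+1)) := by
    simpa using hW.mul_right (f x / ((n:ℝ)+1))
  have hdiffint : ∀ k, Wgb a n k x * Jint n f k - Wgb a n k x * (f x / ((n:ℝ)+1))
      = Wgb a n k x * Jint n (fun t => f t - f x) k := by
    intro k
    rw [← mul_sub]
    congr 1
    have h1 : Jint n (fun t => f t - f x) k = Jint n f k - Jint n (fun _ => f x) k := by
      rw [Jint, Jint, Jint,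
        intervalIntegral.integral_sub (Jint_integrable hcont n k) intervalIntegrable_const]
    rw [h1, Jint_const]
  -- representation of the difference
  have step1 : Kgb a n f x - f x
      = ((n:ℝ)+1) * ∑' k, Wgb a n k x * Jint n (fun t => f t - f x) k := by
    have h2 : ∑' k, Wgb a n k x * Jint n (fun t => f t - f x) k
        = (∑' k, Wgb a n k x * Jint n f k) - f x / ((n:ℝ)+1) := by
      rw [← tsum_congr hdiffint] at *
      rw [Summable.tsum_sub hsum_f hconst.summable, hconst.tsum_eq]
    rw [h2, Kgb_eq, mul_sub, mul_div_cancel₀ _ (ne_of_gt hN)]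
  -- the majorant function
  have hgcont : ContinuousOn
      (fun t : ℝ => (4*Mf*(1+b^2) + ω/δ^2) * (t - x)^2 + ω) (Set.Ici 0) :=
    (((continuous_const.mul ((continuous_id.sub continuous_const).pow 2)).add
      continuous_const)).continuousOn
  have hJg : ∀ k, Jint n (fun t => (4*Mf*(1+b^2) + ω/δ^2) * (t - x)^2 + ω) k
      = (4*Mf*(1+b^2) + ω/δ^2) * Jint n (fun t => (t - x)^2) k + ω/((n:ℝ)+1) := by
    intro k
    have hint_q : IntervalIntegrable (fun t : ℝ => (t - x)^2) volume
        ((k:ℝ)/((n:ℝ)+1)) (((k:ℝ)+1)/((n:ℝ)+1)) := Jint_integrable hqcont n k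
    rw [Jint,
      intervalIntegral.integral_add (hint_q.const_mul _) intervalIntegrable_const,
      intervalIntegral.integral_const_mul, intervalIntegral.integral_const, smul_eq_mul]
    rw [Jint]
    congr 1
    have : (((k:ℝ)+1)/((n:ℝ)+1) - (k:ℝ)/((n:ℝ)+1)) = 1/((n:ℝ)+1) := by
      field_simp; ring
    rw [this]
    ring
  have hsum_g : Summable (fun k => Wgb a n k x *
      Jint n (fun t => (4*Mf*(1+b^2) + ω/δ^2) * (t - x)^2 + ω) k) := by
    refine ((hsum_q.mul_left (4*Mf*(1+b^2) + ω/δ^2)).add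
      (hW.summable.mul_left (ω/((n:ℝ)+1)))).congr fun k => ?_
    rw [hJg k]; ring
  -- pointwise comparison of the integrals
  have hJcomp : ∀ k, Wgb a n k x * |Jint n (fun t => f t - f x) k|
      ≤ Wgb a n k x * Jint n (fun t => (4*Mf*(1+b^2) + ω/δ^2) * (t - x)^2 + ω) k := by
    intro k
    refine mul_le_mul_of_nonneg_left ?_ (hWnn k)
    have habsint : IntervalIntegrable (fun t : ℝ => |f t - f x|) volume
        ((k:ℝ)/((n:ℝ)+1)) (((k:ℝ)+1)/((n:ℝ)+1)) :=
      Jint_integrable ((hcont.sub continuousOn_const).abs) n k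
    have h1 : |Jint n (fun t => f t - f x) k| ≤ Jint n (fun t => |f t - f x|) k := by
      rw [Jint, Jint]
      exact intervalIntegral.abs_integral_le_integral_abs (lo_le_hi n k)
    refine le_trans h1 ?_
    rw [Jint, Jint]
    refine intervalIntegral.integral_mono_on (lo_le_hi n k) habsint
      (Jint_integrable hgcont n k) ?_
    intro t htm
    have ht0 : 0 ≤ t := le_trans (lo_nonneg n k) htm.1
    have hpb := pointwise_bound hb hM hcont hgrow hx hδpos ht0
    calc |f t - f x| ≤ 4*Mf*(1+b^2)*(t-x)^2 + modContOn f (b+1) δ * (1 + (t-x)^2/δ^2) := hpb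
      _ = (4*Mf*(1+b^2) + ω/δ^2) * (t - x)^2 + ω := by rw [← hωdef]; ring
  -- combine
  have hsum_diff : Summable (fun k => Wgb a n k x * Jint n (fun t => f t - f x) k) := by
    refine (hsum_f.sub hconst.summable).congr fun k => ?_
    exact hdiffint k
  have step2 : |Kgb a n f x - f x| ≤ ((n:ℝ)+1) * ∑' k, Wgb a n k x *
      Jint n (fun t => (4*Mf*(1+b^2) + ω/δ^2) * (t - x)^2 + ω) k := by
    rw [step1, abs_mul, abs_of_pos hN]
    refine mul_le_mul_of_nonneg_left ?_ hN.le
    have h1 : |∑' k, Wgb a n k x * Jint n (fun t => f t - f x) k|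
        ≤ ∑' k, |Wgb a n k x * Jint n (fun t => f t - f x) k| := by
      have := norm_tsum_le_tsum_norm (f := fun k => Wgb a n k x *
        Jint n (fun t => f t - f x) k)
        (by simp only [Real.norm_eq_abs]; exact hsum_diff.abs)
      simp only [Real.norm_eq_abs] at this
      exact this
    refine le_trans h1 ?_
    refine Summable.tsum_le_tsum ?_ hsum_diff.abs hsum_g
    intro k
    rw [abs_mul, abs_of_nonneg (hWnn k)]
    exact hJcomp k
  have step3 : ((n:ℝ)+1) * ∑' k, Wgb a n k x *
      Jint n (fun t => (4*Mf*(1+b^2) + ω/δ^2) * (t - x)^2 + ω) k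
      = 4*Mf*(1+b^2)*u2 + 2*ω := by
    have h1 : ∀ k, Wgb a n k x *
        Jint n (fun t => (4*Mf*(1+b^2) + ω/δ^2) * (t - x)^2 + ω) k
        = (4*Mf*(1+b^2) + ω/δ^2) * (Wgb a n k x * Jint n (fun t => (t - x)^2) k)
          + (ω/((n:ℝ)+1)) * Wgb a n k x := by
      intro k; rw [hJg k]; ring
    rw [tsum_congr h1,
      Summable.tsum_add (hsum_q.mul_left _) (hW.summable.mul_left _),
      tsum_mul_left, tsum_mul_left, hW.tsum_eq]
    have hωu : ω/δ^2 * u2 = ω := by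
      rw [hδsq]
      field_simp
    have hu2N' : ((n:ℝ)+1) * ∑' k, Wgb a n k x * Jint n (fun t => (t - x)^2) k = u2 :=
      hu2N.symm
    calc ((n:ℝ)+1) * ((4*Mf*(1+b^2) + ω/δ^2) * (∑' k, Wgb a n k x * Jint n (fun t => (t - x)^2) k)
          + ω/((n:ℝ)+1) * 1)
        = (4*Mf*(1+b^2) + ω/δ^2) * (((n:ℝ)+1) * ∑' k, Wgb a n k x * Jint n (fun t => (t - x)^2) k)
          + ω := by field_simp
      _ = (4*Mf*(1+b^2) + ω/δ^2) * u2 + ω := by rw [hu2N']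
      _ = 4*Mf*(1+b^2)*u2 + (ω/δ^2 * u2) + ω := by ring
      _ = 4*Mf*(1+b^2)*u2 + 2*ω := by rw [hωu]; ring
  calc |Kgb a n f x - f x| ≤ _ := step2
    _ = 4*Mf*(1+b^2)*u2 + 2*ω := step3
    _ = 4 * Mf * (1 + b ^ 2) * u2 + 2 * ω := by ring
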